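/- For any complex unit vector ψ in (ℂ²)^⊗n ⊗ H (for an arbitrary finite-dimensional Hilbert space H), let Q⁺(x) be the probability of outcome x ∈ {0,1}ⁿ when measuring the first n qubits in the computational basis, and Q^×(z) the probability of outcome z when measuring them in the Hadamard basis (i.e. Q^×(z) is the squared norm of the z-component after applying H^⊗n to the first n qubits). Then for any subsets L⁺, L^× ⊆ {0,1}ⁿ: Q⁺(L⁺) + Q^×(L^×) ≤ (1 + √(2^{-n}·|L⁺|·|L^×|))². -/

import Mathlib

open scoped BigOperators ComplexConjugate

/-- The sign `(-1)^{x·z}` where `x·z` is the inner product mod 2 of bit strings. -/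
noncomputable def hadSign {n : ℕ} (x z : Fin n → Bool) : ℂ :=
  (-1) ^ (∑ i : Fin n, (if x i && z i then 1 else 0 : ℕ))

/-- Probability of outcome `x` when measuring the first `n` qubits of
`ψ = ∑ x, α x • (|x⟩ ⊗ φ x)` in the computational basis. -/
noncomputable def Qplus {n : ℕ} (α : (Fin n → Bool) → ℂ) (x : Fin n → Bool) : ℝ :=
  ‖α x‖ ^ 2

/-- Probability of outcome `z` when measuring the first `n` qubits in the Hadamard basis. -/
noncomputable def Qtimes {H : Type*} [NormedAddCommGroup H] [InnerProductSpace ℂ H]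
    {n : ℕ} (α : (Fin n → Bool) → ℂ) (φ : (Fin n → Bool) → H) (z : Fin n → Bool) : ℝ :=
  ‖∑ x : Fin n → Bool, ((((Real.sqrt (2 ^ n))⁻¹ : ℝ) : ℂ) * hadSign x z * α x) • φ x‖ ^ 2

lemma hadSign_eq_prod {n : ℕ} (x z : Fin n → Bool) :
    hadSign x z = ∏ i, (if x i && z i then (-1:ℂ) else 1) := by
  rw [hadSign, ← Finset.prod_pow_eq_pow_sum]
  exact Finset.prod_congr rfl fun i _ => by split <;> simp

lemma hadSign_symm {n : ℕ} (x z : Fin n → Bool) : hadSign x z = hadSign z x := by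
  simp [hadSign, Bool.and_comm]

lemma conj_hadSign {n : ℕ} (x z : Fin n → Bool) :
    (starRingEnd ℂ) (hadSign x z) = hadSign x z := by
  simp [hadSign]

lemma norm_hadSign {n : ℕ} (x z : Fin n → Bool) : ‖hadSign x z‖ = 1 := by
  simp [hadSign]

lemma hadSign_orthogonality {n : ℕ} (x y : Fin n → Bool) :
    ∑ z : Fin n → Bool, hadSign x z * hadSign y z
      = if x = y then ((2:ℂ)^n) else 0 := by
  have h : ∀ z : Fin n → Bool, hadSign x z * hadSign y z
      = ∏ i, ((if x i && z i then (-1:ℂ) else 1) * (if y i && z i then (-1:ℂ) else 1)) := by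
    intro z; rw [hadSign_eq_prod, hadSign_eq_prod, Finset.prod_mul_distrib]
  simp only [h]
  rw [← Fintype.prod_sum (fun i b => ((if x i && b then (-1:ℂ) else 1) * (if y i && b then (-1:ℂ) else 1)))]
  have : ∀ i, (∑ b : Bool, ((if x i && b then (-1:ℂ) else 1) * (if y i && b then (-1:ℂ) else 1)))
      = if x i = y i then 2 else 0 := by
    intro i; cases hx : x i <;> cases hy : y i <;> norm_num [Fintype.sum_bool]
  rw [Finset.prod_congr rfl fun i _ => this i]
  by_cases hxy : x = y
  · subst hxy; simp
  · rw [if_neg hxy]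
    obtain ⟨i, hi⟩ : ∃ i, x i ≠ y i := Function.ne_iff.mp hxy
    exact Finset.prod_eq_zero (Finset.mem_univ i) (by simp [hi])

local notation "⟪" x ", " y "⟫" => @inner ℂ _ _ x y

section
variable {H : Type*} [NormedAddCommGroup H] [InnerProductSpace ℂ H] {n : ℕ}

noncomputable def hadT (f : (Fin n → Bool) → H) : (Fin n → Bool) → H :=
  fun z => ∑ x, ((((Real.sqrt (2 ^ n))⁻¹ : ℝ) : ℂ) * hadSign x z) • f x

lemma cc_sq : ((((Real.sqrt (2 ^ n))⁻¹ : ℝ) : ℂ)) * ((((Real.sqrt (2 ^ n))⁻¹ : ℝ) : ℂ))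
    = ((2:ℂ)^n)⁻¹ := by
  rw [← Complex.ofReal_mul, ← mul_inv, Real.mul_self_sqrt (by positivity)]
  push_cast
  simp

lemma hadT_inner (f g : (Fin n → Bool) → H) :
    ∑ z : Fin n → Bool, ⟪hadT f z, hadT g z⟫ = ∑ x : Fin n → Bool, ⟪f x, g x⟫ := by
  set cc : ℂ := (((Real.sqrt (2 ^ n))⁻¹ : ℝ) : ℂ) with hcc
  have expand : ∀ z : Fin n → Bool, ⟪hadT f z, hadT g z⟫
      = ∑ x : Fin n → Bool, ∑ y : Fin n → Bool,
          ((cc * cc) * (hadSign x z * hadSign y z)) * ⟪f x, g y⟫ := by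
    intro z
    simp only [hadT]
    rw [sum_inner]
    refine Finset.sum_congr rfl fun x _ => ?_
    rw [inner_sum]
    refine Finset.sum_congr rfl fun y _ => ?_
    rw [inner_smul_left, inner_smul_right, map_mul, conj_hadSign, Complex.conj_ofReal]
    ring
  simp only [expand]
  rw [Finset.sum_comm]
  refine Finset.sum_congr rfl fun x _ => ?_
  rw [Finset.sum_comm]
  have : ∀ y : Fin n → Bool,
      ∑ z : Fin n → Bool, ((cc * cc) * (hadSign x z * hadSign y z)) * ⟪f x, g y⟫
      = (if x = y then (1:ℂ) else 0) * ⟪f x, g y⟫ := by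
    intro y
    rw [← Finset.sum_mul]
    congr 1
    rw [← Finset.mul_sum, hadSign_orthogonality]
    by_cases h : x = y
    · simp only [if_pos h]
      rw [cc_sq]
      exact inv_mul_cancel₀ (pow_ne_zero n two_ne_zero)
    · simp [h]
  simp only [this, ite_mul, one_mul, zero_mul, Finset.sum_ite_eq, Finset.mem_univ, if_true]

lemma hadT_symm_inner (f g : (Fin n → Bool) → H) :
    ∑ x : Fin n → Bool, ⟪hadT f x, g x⟫ = ∑ z : Fin n → Bool, ⟪f z, hadT g z⟫ := by
  set cc : ℂ := (((Real.sqrt (2 ^ n))⁻¹ : ℝ) : ℂ) with hcc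
  have L : ∀ x : Fin n → Bool, ⟪hadT f x, g x⟫
      = ∑ y : Fin n → Bool, (cc * hadSign y x) * ⟪f y, g x⟫ := by
    intro x
    rw [hadT, sum_inner]
    refine Finset.sum_congr rfl fun y _ => ?_
    rw [inner_smul_left, map_mul, conj_hadSign, Complex.conj_ofReal]
  have R : ∀ z : Fin n → Bool, ⟪f z, hadT g z⟫
      = ∑ y : Fin n → Bool, (cc * hadSign y z) * ⟪f z, g y⟫ := by
    intro z
    rw [hadT, inner_sum]
    refine Finset.sum_congr rfl fun y _ => ?_
    rw [inner_smul_right]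
  simp only [L, R]
  rw [Finset.sum_comm]
  refine Finset.sum_congr rfl fun y _ => Finset.sum_congr rfl fun x _ => ?_
  rw [hadSign_symm]

lemma hadT_apply_norm_le (f : (Fin n → Bool) → H) (z : Fin n → Bool) :
    ‖hadT f z‖ ≤ (Real.sqrt (2 ^ n))⁻¹ * ∑ x : Fin n → Bool, ‖f x‖ := by
  rw [hadT, Finset.mul_sum]
  refine (norm_sum_le _ _).trans (Finset.sum_le_sum fun x _ => ?_)
  rw [norm_smul, norm_mul, norm_hadSign, Complex.norm_real]
  simp [abs_of_nonneg (Real.sqrt_nonneg _)]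

end

set_option maxHeartbeats 2000000 in
/-- Two-basis uncertainty relation (Theorem 2 of the paper):
`Q⁺(L⁺) + Q^×(L^×) ≤ (1 + √(2^{-n}·|L⁺|·|L^×|))²`. -/
theorem uncertainty_two_bases {H : Type*} [NormedAddCommGroup H] [InnerProductSpace ℂ H]
    {n : ℕ} (α : (Fin n → Bool) → ℂ) (φ : (Fin n → Bool) → H)
    (hφ : ∀ x, ‖φ x‖ = 1) (hα : ∑ x : Fin n → Bool, ‖α x‖ ^ 2 = 1)
    (Lp Lt : Finset (Fin n → Bool)) :
    ∑ x ∈ Lp, Qplus α x + ∑ z ∈ Lt, Qtimes α φ z ≤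
      (1 + Real.sqrt ((2 ^ n : ℝ)⁻¹ * Lp.card * Lt.card)) ^ 2 := by

  classical
  set c : ℝ := Real.sqrt ((2 ^ n : ℝ)⁻¹ * Lp.card * Lt.card) with hc
  have hc0 : 0 ≤ c := Real.sqrt_nonneg _
  -- the state as an element of the big Hilbert space
  set v : PiLp 2 (fun _ : Fin n → Bool => H) := WithLp.toLp 2 (fun x => α x • φ x) with hv
  have hnv : ∀ x, ‖v x‖ = ‖α x‖ := by
    intro x; simp [hv, norm_smul, hφ x]
  -- Qtimes is the norm² of the Hadamard transform of v
  have hQt : ∀ z, Qtimes α φ z = ‖hadT v z‖ ^ 2 := by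
    intro z
    rw [Qtimes, hadT]
    congr 2
    refine Finset.sum_congr rfl fun x _ => ?_
    rw [smul_smul]
  set a2 : ℝ := ∑ x ∈ Lp, Qplus α x with ha2
  set b2 : ℝ := ∑ z ∈ Lt, Qtimes α φ z with hb2
  have ha2' : a2 = ∑ x ∈ Lp, ‖v x‖ ^ 2 := by
    rw [ha2]; exact Finset.sum_congr rfl fun x _ => by rw [Qplus, hnv]
  have hb2' : b2 = ∑ z ∈ Lt, ‖hadT v z‖ ^ 2 := by
    rw [hb2]; exact Finset.sum_congr rfl fun z _ => hQt z
  have ha2nn : 0 ≤ a2 := ha2' ▸ Finset.sum_nonneg fun _ _ => sq_nonneg _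
  have hb2nn : 0 ≤ b2 := hb2' ▸ Finset.sum_nonneg fun _ _ => sq_nonneg _
  set u : PiLp 2 (fun _ : Fin n → Bool => H) := WithLp.toLp 2 (fun x => if x ∈ Lp then v x else 0) with hu
  set q : (Fin n → Bool) → H := fun z => if z ∈ Lt then hadT v z else 0 with hq
  set w : PiLp 2 (fun _ : Fin n → Bool => H) := WithLp.toLp 2 (hadT q) with hw
  -- norm of v is 1
  have hnv1 : ‖v‖ = 1 := by
    have h := PiLp.norm_sq_eq_of_L2 (fun _ : Fin n → Bool => H) v
    have : ‖v‖ ^ 2 = 1 := by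
      rw [h]; rw [← hα]; exact Finset.sum_congr rfl fun x _ => by rw [hnv]
    nlinarith [norm_nonneg v]
  -- inner products
  have hiu : ⟪u, v⟫ = (a2 : ℂ) := by
    rw [PiLp.inner_apply]
    have h : ∀ x : Fin n → Bool, ⟪u x, v x⟫ = if x ∈ Lp then ((‖v x‖ : ℂ)) ^ 2 else 0 := by
      intro x
      by_cases hx : x ∈ Lp
      · simp only [hu, if_pos hx]
        exact inner_self_eq_norm_sq_to_K (v x)
      · simp [hu, hx]
    simp only [h]
    rw [Finset.sum_ite_mem, Finset.univ_inter, ha2']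
    norm_cast
  have hiw : ⟪w, v⟫ = (b2 : ℂ) := by
    rw [PiLp.inner_apply, hw]
    rw [show (∑ x : Fin n → Bool, ⟪hadT q x, v x⟫) = ∑ z : Fin n → Bool, ⟪q z, hadT v z⟫
        from hadT_symm_inner q v]
    have h : ∀ z : Fin n → Bool, ⟪q z, hadT v z⟫ = if z ∈ Lt then ((‖hadT v z‖ : ℂ)) ^ 2 else 0 := by
      intro z
      by_cases hz : z ∈ Lt
      · simp only [hq, if_pos hz]
        exact inner_self_eq_norm_sq_to_K (hadT v z)
      · simp [hq, hz]
    simp only [h]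
    rw [Finset.sum_ite_mem, Finset.univ_inter, hb2']
    norm_cast
  have hnu : ‖u‖ ^ 2 = a2 := by
    rw [PiLp.norm_sq_eq_of_L2, ha2']
    have h : ∀ x : Fin n → Bool, ‖u x‖ ^ 2 = if x ∈ Lp then ‖v x‖ ^ 2 else 0 := by
      intro x; by_cases hx : x ∈ Lp <;> simp [hu, hx]
    simp only [h]
    rw [Finset.sum_ite_mem, Finset.univ_inter]
  have hnw : ‖w‖ ^ 2 = b2 := by
    rw [PiLp.norm_sq_eq_of_L2, hw]
    have h1 := congrArg RCLike.re (hadT_inner q q)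
    rw [map_sum, map_sum] at h1
    simp only [inner_self_eq_norm_sq] at h1
    rw [h1]
    have h : ∀ z : Fin n → Bool, ‖q z‖ ^ 2 = if z ∈ Lt then ‖hadT v z‖ ^ 2 else 0 := by
      intro z; by_cases hz : z ∈ Lt <;> simp [hq, hz]
    simp only [h]
    rw [Finset.sum_ite_mem, Finset.univ_inter, hb2']
  -- cross term bound
  have hcross : RCLike.re ⟪u, w⟫ ≤ c * (Real.sqrt a2 * Real.sqrt b2) := by
    have hswap : ⟪u, w⟫ = ∑ z : Fin n → Bool, ⟪hadT u z, q z⟫ := by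
      rw [PiLp.inner_apply, hw]
      exact (hadT_symm_inner u q).symm
    have h1 : RCLike.re ⟪u, w⟫ = ∑ z : Fin n → Bool, RCLike.re ⟪hadT u z, q z⟫ := by
      rw [hswap, map_sum]
    -- Cauchy–Schwarz on finite sums
    have CS : ∀ (s : Finset (Fin n → Bool)) (f : (Fin n → Bool) → ℝ), (∀ i, 0 ≤ f i) →
        ∑ i ∈ s, f i ≤ Real.sqrt s.card * Real.sqrt (∑ i ∈ s, f i ^ 2) := by
      intro s f hf
      rw [← Real.sqrt_mul (by positivity)]
      rw [Real.le_sqrt (Finset.sum_nonneg fun i _ => hf i) (by positivity)]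
      have h2 := Finset.sum_mul_sq_le_sq_mul_sq s (fun _ => (1:ℝ)) f
      simpa using h2
    -- bound on ‖hadT u z‖
    have hSA : ∑ x : Fin n → Bool, ‖u x‖ = ∑ x ∈ Lp, ‖v x‖ := by
      have h : ∀ x : Fin n → Bool, ‖u x‖ = if x ∈ Lp then ‖v x‖ else 0 := by
        intro x; by_cases hx : x ∈ Lp <;> simp [hu, hx]
      simp only [h]
      rw [Finset.sum_ite_mem, Finset.univ_inter]
    have hSA2 : ∑ x ∈ Lp, ‖v x‖ ≤ Real.sqrt Lp.card * Real.sqrt a2 := by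
      rw [ha2']; exact CS Lp _ fun i => norm_nonneg _
    have hFu : ∀ z, ‖hadT u z‖ ≤ (Real.sqrt (2 ^ n))⁻¹ * (Real.sqrt Lp.card * Real.sqrt a2) := by
      intro z
      refine (hadT_apply_norm_le u z).trans ?_
      rw [hSA]
      exact mul_le_mul_of_nonneg_left hSA2 (by positivity)
    have hSB : ∑ z ∈ Lt, ‖hadT v z‖ ≤ Real.sqrt Lt.card * Real.sqrt b2 := by
      rw [hb2']; exact CS Lt _ fun i => norm_nonneg _
    have h2 : ∀ z : Fin n → Bool, RCLike.re ⟪hadT u z, q z⟫ ≤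
        if z ∈ Lt then ‖hadT u z‖ * ‖hadT v z‖ else 0 := by
      intro z
      by_cases hz : z ∈ Lt
      · simp only [hq, if_pos hz]
        exact re_inner_le_norm _ _
      · simp [hq, hz]
    have h3 : RCLike.re ⟪u, w⟫ ≤ ∑ z ∈ Lt, ‖hadT u z‖ * ‖hadT v z‖ := by
      rw [h1]
      refine (Finset.sum_le_sum fun z _ => h2 z).trans ?_
      rw [Finset.sum_ite_mem, Finset.univ_inter]
    have h4 : ∑ z ∈ Lt, ‖hadT u z‖ * ‖hadT v z‖ ≤
        ((Real.sqrt (2 ^ n))⁻¹ * (Real.sqrt Lp.card * Real.sqrt a2)) * (Real.sqrt Lt.card * Real.sqrt b2) := by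
      calc ∑ z ∈ Lt, ‖hadT u z‖ * ‖hadT v z‖
          ≤ ∑ z ∈ Lt, ((Real.sqrt (2 ^ n))⁻¹ * (Real.sqrt Lp.card * Real.sqrt a2)) * ‖hadT v z‖ := by
            refine Finset.sum_le_sum fun z _ => mul_le_mul_of_nonneg_right (hFu z) (norm_nonneg _)
        _ = ((Real.sqrt (2 ^ n))⁻¹ * (Real.sqrt Lp.card * Real.sqrt a2)) * ∑ z ∈ Lt, ‖hadT v z‖ := by
            rw [Finset.mul_sum]
        _ ≤ _ := by
            refine mul_le_mul_of_nonneg_left hSB (by positivity)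
    have hceq : (Real.sqrt (2 ^ n))⁻¹ * Real.sqrt Lp.card * Real.sqrt Lt.card = c := by
      rw [hc, Real.sqrt_mul (by positivity), Real.sqrt_mul (by positivity), Real.sqrt_inv]
    calc RCLike.re ⟪u, w⟫ ≤ _ := h3.trans h4
      _ = ((Real.sqrt (2 ^ n))⁻¹ * Real.sqrt Lp.card * Real.sqrt Lt.card) * (Real.sqrt a2 * Real.sqrt b2) := by
          ring
      _ = c * (Real.sqrt a2 * Real.sqrt b2) := by rw [hceq]
  -- step 1 : a2 + b2 ≤ ‖u + w‖
  have step1 : a2 + b2 ≤ ‖u + w‖ := by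
    have h1 : ⟪u + w, v⟫ = ((a2 + b2 : ℝ) : ℂ) := by
      rw [inner_add_left, hiu, hiw]; push_cast; ring
    have h2 : RCLike.re ⟪u + w, v⟫ ≤ ‖u + w‖ * ‖v‖ := re_inner_le_norm _ _
    rw [h1, hnv1, mul_one] at h2
    simpa using h2
  -- step 2 : ‖u + w‖² ≤ (a2+b2) * (1+c)
  have step2 : ‖u + w‖ ^ 2 ≤ (a2 + b2) * (1 + c) := by
    have hexp := norm_add_sq (𝕜 := ℂ) u w
    have hab : 2 * (Real.sqrt a2 * Real.sqrt b2) ≤ a2 + b2 := by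
      nlinarith [Real.sq_sqrt ha2nn, Real.sq_sqrt hb2nn, sq_nonneg (Real.sqrt a2 - Real.sqrt b2)]
    nlinarith [hcross, hc0, Real.sqrt_nonneg a2, Real.sqrt_nonneg b2]
  -- finish
  have hfin : (a2 + b2) ^ 2 ≤ (a2 + b2) * (1 + c) := by
    calc (a2 + b2) ^ 2 ≤ ‖u + w‖ ^ 2 := by
          have := norm_nonneg (u + w)
          nlinarith [step1, ha2nn, hb2nn]
      _ ≤ (a2 + b2) * (1 + c) := step2
  nlinarith [hfin, ha2nn, hb2nn, hc0]
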